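/- Let L ≥ 2, d_0 ≥ 1, d_L ≥ 1, and 1 ≤ r ≤ min{d_0, d_L}. Let U₁ ∈ ℝ^{d_L×r} and V₁ ∈ ℝ^{d_0×r} have orthonormal columns, let λ₁, …, λ_r > 0, and define G as in the general Gram-matrix construction. Suppose λ_i ∈ [m − δ, m + δ] for all i = 1, …, r, where 0 < δ < m, and suppose (m + δ)/(m − δ) < L^{1/(2(L−1))}. Then: (i) the r² eigenvalues ν_{i,j} = Σ_{l=1}^{L} λ_i^{2(L−l)} λ_j^{2(l−1)} (1 ≤ i,j ≤ r) all lie in [L(m − δ)^{2(L−1)}, L(m + δ)^{2(L−1)}]; (ii) the (d_0 + d_L − 2r)r remaining nonzero eigenvalues all lie in [(m − δ)^{2(L−1)}, (m + δ)^{2(L−1)}]; (iii) every eigenvalue in the first cluster is strictly larger than every eigenvalue in the second cluster; (iv) the ratio of any eigenvalue ν_dom of the first cluster to any eigenvalue ν_bulk of the second cluster satisfies L((m−δ)/(m+δ))^{2(L−1)} ≤ ν_dom/ν_bulk ≤ L((m+δ)/(m−δ))^{2(L−1)}. -/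

import Mathlib

open Matrix
open scoped Kronecker

section StatementThreeHelpers
open Polynomial

section Helpers

lemma charpoly_conj_aux {n R : Type*} [DecidableEq n] [Fintype n] [CommRing R]
    (P Q A : Matrix n n R) (hPQ : P * Q = 1) :
    (P * A * Q).charpoly = A.charpoly := by
  have hPQ' : P.map C * Q.map C = 1 := by
    rw [← Matrix.map_mul, hPQ]; simp
  have h1 : (P * A * Q).charmatrix = P.map C * A.charmatrix * Q.map C := by
    unfold Matrix.charmatrix
    rw [mul_sub, sub_mul]
    congr 1
    · rw [Matrix.scalar_apply]
      rw [show (Matrix.diagonal fun _ : n => (X : R[X])) = (X : R[X]) • (1 : Matrix n n R[X]) by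
        simp [Matrix.smul_eq_diagonal_mul]]
      rw [Matrix.mul_smul, Matrix.smul_mul, mul_one, hPQ']
    · simp [RingHom.mapMatrix_apply, Matrix.map_mul]
  rw [Matrix.charpoly, h1, Matrix.det_mul, Matrix.det_mul, Matrix.charpoly]
  have h2 : (P.map (C : R →+* R[X])).det * (Q.map (C : R →+* R[X])).det = 1 := by
    rw [← Matrix.det_mul, hPQ', Matrix.det_one]
  calc (P.map C).det * A.charmatrix.det * (Q.map C).det
      = A.charmatrix.det * ((P.map C).det * (Q.map C).det) := by ring
    _ = A.charmatrix.det := by rw [h2, mul_one]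

lemma charpoly_diag {n R : Type*} [DecidableEq n] [Fintype n] [CommRing R] (d : n → R) :
    (Matrix.diagonal d).charpoly = ∏ i, (X - C (d i)) := by
  have h : (Matrix.diagonal d).charmatrix = Matrix.diagonal (fun i => X - C (d i)) := by
    ext i j
    by_cases h : i = j
    · subst h; simp [Matrix.charmatrix_apply_eq]
    · simp [Matrix.charmatrix_apply_ne _ _ _ h, Matrix.diagonal_apply_ne _ h]
  rw [Matrix.charpoly, h, Matrix.det_diagonal]

lemma eig_multiset {n : Type*} [DecidableEq n] [Fintype n] {A : Matrix n n ℝ}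
    (hA : A.IsHermitian) (d : n → ℝ) (hd : A.charpoly = (Matrix.diagonal d).charpoly) :
    Finset.univ.val.map hA.eigenvalues = Finset.univ.val.map d := by
  have hU := hA.spectral_theorem
  have h1 : A.charpoly = (Matrix.diagonal hA.eigenvalues).charpoly := by
    conv_lhs => rw [hU]
    have := charpoly_conj_aux (n := n) (R := ℝ)
      (hA.eigenvectorUnitary : Matrix n n ℝ) (star (hA.eigenvectorUnitary : Matrix n n ℝ))
      (Matrix.diagonal (RCLike.ofReal ∘ hA.eigenvalues))
      (by simpa using (Matrix.mem_unitaryGroup_iff).mp hA.eigenvectorUnitary.2)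
    rw [Unitary.conjStarAlgAut_apply, this]
    have h0 : (RCLike.ofReal ∘ hA.eigenvalues : n → ℝ) = hA.eigenvalues := by
      ext i; simp [Function.comp]
    rw [h0]
  have h2 : ∏ i, (X - C (hA.eigenvalues i)) = ∏ i, (X - C (d i)) := by
    rw [← charpoly_diag, ← charpoly_diag, ← h1, hd]
  have h3 : ∀ f : n → ℝ, (Finset.univ.val.map f).map (fun a => X - C a) =
      Finset.univ.val.map (fun i => X - C (f i)) := fun f => by
    rw [Multiset.map_map]; rfl
  have h4 := Polynomial.roots_multiset_prod_X_sub_C (Finset.univ.val.map hA.eigenvalues)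
  have h5 := Polynomial.roots_multiset_prod_X_sub_C (Finset.univ.val.map d)
  rw [h3] at h4 h5
  rw [← h4, ← h5]
  congr 1

lemma exists_orthogonal_extension {n r : ℕ} (hrn : r ≤ n) (U1 : Matrix (Fin n) (Fin r) ℝ)
    (hU1 : U1ᵀ * U1 = 1) :
    ∃ U : Matrix (Fin n) (Fin n) ℝ, Uᵀ * U = 1 ∧ U * Uᵀ = 1 ∧
      ∀ (i : Fin r) (k : Fin n), U k (Fin.castLE hrn i) = U1 k i := by
  classical
  set v : Fin n → EuclideanSpace ℝ (Fin n) := fun x =>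
    if h : (x : ℕ) < r then WithLp.toLp 2 (fun k => U1 k ⟨x, h⟩) else 0 with hv
  set s : Set (Fin n) := {x | (x : ℕ) < r} with hs
  have hON : Orthonormal ℝ (s.restrict v) := by
    rw [orthonormal_iff_ite]
    intro a b
    have ha : ((a : Fin n) : ℕ) < r := a.2
    have hb : ((b : Fin n) : ℕ) < r := b.2
    have hinner : inner ℝ (s.restrict v a) (s.restrict v b) =
        ∑ k : Fin n, U1 k ⟨(a : Fin n), ha⟩ * U1 k ⟨(b : Fin n), hb⟩ := by
      rw [PiLp.inner_apply]
      simp [Set.restrict, v, dif_pos ha, dif_pos hb, RCLike.inner_apply]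
      exact Finset.sum_congr rfl fun _ _ => mul_comm _ _
    rw [hinner]
    have := congrFun (congrFun hU1 ⟨(a : Fin n), ha⟩) ⟨(b : Fin n), hb⟩
    rw [Matrix.mul_apply] at this
    simp only [Matrix.transpose_apply] at this
    rw [this]
    by_cases hab : a = b
    · subst hab; simp [Matrix.one_apply]
    · have : (⟨((a : Fin n) : ℕ), ha⟩ : Fin r) ≠ ⟨((b : Fin n) : ℕ), hb⟩ := by
        intro h
        apply hab
        have := congrArg Fin.val h
        simp at this
        exact Subtype.ext (Fin.ext this)
      simp [Matrix.one_apply, this, hab]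
  have hcard : Module.finrank ℝ (EuclideanSpace ℝ (Fin n)) = Fintype.card (Fin n) := by
    simp
  obtain ⟨b, hb⟩ := hON.exists_orthonormalBasis_extension_of_card_eq hcard
  refine ⟨Matrix.of fun k x => b x k, ?_, ?_, ?_⟩
  · ext x y
    rw [Matrix.mul_apply]
    have := (orthonormal_iff_ite (𝕜 := ℝ)).mp b.orthonormal x y
    rw [PiLp.inner_apply] at this
    simp only [RCLike.inner_apply, starRingEnd_apply, star_trivial] at this
    simp only [Matrix.transpose_apply, Matrix.of_apply]
    rw [Matrix.one_apply, ← this]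
    exact Finset.sum_congr rfl fun _ _ => mul_comm _ _
  · rw [mul_eq_one_comm]
    ext x y
    rw [Matrix.mul_apply]
    have := (orthonormal_iff_ite (𝕜 := ℝ)).mp b.orthonormal x y
    rw [PiLp.inner_apply] at this
    simp only [RCLike.inner_apply, starRingEnd_apply, star_trivial] at this
    simp only [Matrix.transpose_apply, Matrix.of_apply]
    rw [Matrix.one_apply, ← this]
    exact Finset.sum_congr rfl fun _ _ => mul_comm _ _
  · intro i k
    have hmem : (Fin.castLE hrn i) ∈ s := by simp [hs]
    have := hb _ hmem
    have h2 : b (Fin.castLE hrn i) k = v (Fin.castLE hrn i) k := by rw [this]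
    rw [Matrix.of_apply, h2, hv]
    have hi : ((Fin.castLE hrn i : Fin n) : ℕ) < r := i.2
    simp only [dif_pos hi]
    congr 1

/-- pad a function on `Fin r` by zeros to `Fin n` -/
def padFn {n r : ℕ} (f : Fin r → ℝ) : Fin n → ℝ :=
  fun x => if h : (x : ℕ) < r then f ⟨x, h⟩ else 0

lemma conj_pad {n r : ℕ} (hrn : r ≤ n) (U : Matrix (Fin n) (Fin n) ℝ)
    (U1 : Matrix (Fin n) (Fin r) ℝ) (hUU : Uᵀ * U = 1)
    (hcol : ∀ (i : Fin r) (k : Fin n), U k (Fin.castLE hrn i) = U1 k i)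
    (f : Fin r → ℝ) :
    Uᵀ * (U1 * Matrix.diagonal f * U1ᵀ) * U = Matrix.diagonal (padFn f) := by
  classical
  set J : Matrix (Fin n) (Fin r) ℝ := Matrix.of fun x i => if (x : ℕ) = (i : ℕ) then 1 else 0
    with hJ
  have hUJ : U * J = U1 := by
    ext k i
    rw [Matrix.mul_apply]
    rw [Finset.sum_eq_single (Fin.castLE hrn i)]
    · simp [hJ, hcol i k]
    · intro x _ hx
      have : ¬ ((x : ℕ) = (i : ℕ)) := by
        intro h; exact hx (Fin.ext h)
      simp [hJ, this]
    · simp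
  have hUtU1 : Uᵀ * U1 = J := by
    rw [← hUJ, ← Matrix.mul_assoc, hUU, Matrix.one_mul]
  have hU1tU : U1ᵀ * U = Jᵀ := by
    have := congrArg Matrix.transpose hUtU1
    rwa [Matrix.transpose_mul, Matrix.transpose_transpose] at this
  have key : J * Matrix.diagonal f * Jᵀ = Matrix.diagonal (padFn f) := by
    ext x y
    rw [Matrix.mul_apply]
    simp only [Matrix.diagonal_mul, Matrix.transpose_apply]
    by_cases hx : (x : ℕ) < r
    · rw [Finset.sum_eq_single (⟨(x : ℕ), hx⟩ : Fin r)]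
      · by_cases hxy : x = y
        · subst hxy
          simp [hJ, Matrix.diagonal_apply_eq, padFn, dif_pos hx, Matrix.diagonal_apply,
            Matrix.mul_apply]
        · have hyx : ¬ ((y : ℕ) = (x : ℕ)) := fun h => hxy (Fin.ext h.symm)
          simp [hJ, Matrix.diagonal_apply_ne _ hxy, hyx, Matrix.mul_apply,
            Matrix.diagonal_apply, Finset.sum_ite_eq]
      · intro i _ hi
        have : ¬ ((x : ℕ) = (i : ℕ)) := fun h => hi (by apply Fin.ext; simp [← h])
        simp [hJ, this, Matrix.mul_apply, Matrix.diagonal_apply, Finset.sum_ite_eq]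
      · simp
    · have hdiag : Matrix.diagonal (padFn f : Fin n → ℝ) x y = 0 := by
        by_cases hxy : x = y
        · subst hxy; simp [padFn, dif_neg hx]
        · exact Matrix.diagonal_apply_ne _ hxy
      rw [hdiag]
      apply Finset.sum_eq_zero
      intro i _
      have : ¬ ((x : ℕ) = (i : ℕ)) := by
        intro h; exact hx (h ▸ i.2)
      simp [hJ, this, Matrix.mul_apply, Matrix.diagonal_apply, Finset.sum_ite_eq]
  calc Uᵀ * (U1 * Matrix.diagonal f * U1ᵀ) * U
      = (Uᵀ * U1) * Matrix.diagonal f * (U1ᵀ * U) := by simp only [Matrix.mul_assoc]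
    _ = J * Matrix.diagonal f * Jᵀ := by rw [hUtU1, hU1tU]
    _ = Matrix.diagonal (padFn f) := key

lemma map_univ_prod_bind {σ τ : Type*} [Fintype σ] [Fintype τ] (g : σ × τ → ℝ) :
    (Finset.univ.val.map g) =
      (Finset.univ.val : Multiset σ).bind
        (fun a => (Finset.univ.val : Multiset τ).map fun b => g (a, b)) := by
  rw [← Finset.univ_product_univ, Finset.product_val,
    show ((Finset.univ.val : Multiset σ) ×ˢ (Finset.univ.val : Multiset τ)) =
      (Finset.univ.val : Multiset σ).bind
        (fun a => (Finset.univ.val : Multiset τ).map (Prod.mk a)) from rfl,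
    Multiset.map_bind]
  simp [Multiset.map_map, Function.comp]

lemma univ_val_sum {σ τ : Type*} [Fintype σ] [Fintype τ] [DecidableEq σ] [DecidableEq τ] :
    (Finset.univ.val : Multiset (σ ⊕ τ)) =
      (Finset.univ.val : Multiset σ).map Sum.inl +
      (Finset.univ.val : Multiset τ).map Sum.inr := by
  rw [← Finset.univ_disjSum_univ]
  rfl

lemma map_univ_sum_prod {α β γ δ : Type*} [Fintype α] [Fintype β] [Fintype γ] [Fintype δ]
    [DecidableEq α] [DecidableEq β] [DecidableEq γ] [DecidableEq δ]
    (f : (α ⊕ β) × (γ ⊕ δ) → ℝ) :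
    (Finset.univ.val.map f) =
      (Finset.univ.val.map fun p : α × γ => f (Sum.inl p.1, Sum.inl p.2)) +
      (Finset.univ.val.map fun p : α × δ => f (Sum.inl p.1, Sum.inr p.2)) +
      (Finset.univ.val.map fun p : β × γ => f (Sum.inr p.1, Sum.inl p.2)) +
      (Finset.univ.val.map fun p : β × δ => f (Sum.inr p.1, Sum.inr p.2)) := by
  rw [map_univ_prod_bind, univ_val_sum (σ := α) (τ := β), Multiset.add_bind,
    Multiset.bind_map, Multiset.bind_map]
  simp only [univ_val_sum (σ := γ) (τ := δ), Multiset.map_add, Multiset.map_map,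
    Function.comp, Multiset.bind_add]
  rw [map_univ_prod_bind (fun p : α × γ => f (Sum.inl p.1, Sum.inl p.2)),
    map_univ_prod_bind (fun p : α × δ => f (Sum.inl p.1, Sum.inr p.2)),
    map_univ_prod_bind (fun p : β × γ => f (Sum.inr p.1, Sum.inl p.2)),
    map_univ_prod_bind (fun p : β × δ => f (Sum.inr p.1, Sum.inr p.2))]
  abel

lemma sum_Icc_split (L : ℕ) (hL : 2 ≤ L) (f : ℕ → ℝ) :
    ∑ l ∈ Finset.Icc 1 L, f l = f 1 + f L + ∑ l ∈ Finset.Icc 2 (L - 1), f l := by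
  have h1 : Finset.Icc 1 L = insert 1 (insert L (Finset.Icc 2 (L - 1))) := by
    ext x
    simp only [Finset.mem_Icc, Finset.mem_insert]
    omega
  have h2 : (L : ℕ) ∉ Finset.Icc 2 (L - 1) := by
    simp only [Finset.mem_Icc]; omega
  have h3 : (1 : ℕ) ∉ insert L (Finset.Icc 2 (L - 1)) := by
    simp only [Finset.mem_insert, Finset.mem_Icc]; omega
  rw [h1, Finset.sum_insert h3, Finset.sum_insert h2]
  ring

lemma padFn_left {n r : ℕ} (h : r + (n - r) = n) (f : Fin r → ℝ) (i : Fin r) :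
    padFn f ((finSumFinEquiv.trans (finCongr h)) (Sum.inl i)) = f i := by
  have hval : (((finSumFinEquiv.trans (finCongr h)) (Sum.inl i)) : ℕ) = (i : ℕ) := by simp
  rw [padFn]
  simp only [hval]
  rw [dif_pos i.isLt]

lemma padFn_right {n r : ℕ} (h : r + (n - r) = n) (f : Fin r → ℝ) (j : Fin (n - r)) :
    padFn f ((finSumFinEquiv.trans (finCongr h)) (Sum.inr j)) = 0 := by
  have hval : (((finSumFinEquiv.trans (finCongr h)) (Sum.inr j)) : ℕ) = r + (j : ℕ) := by simp
  rw [padFn]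
  simp only [hval]
  rw [dif_neg (by omega)]

lemma map_univ_prod_const_right {σ τ : Type*} [Fintype σ] [Fintype τ] (g : τ → ℝ) :
    (Finset.univ.val.map fun p : σ × τ => g p.2) =
      (Finset.univ.val : Multiset τ).bind
        (fun b => Multiset.replicate (Fintype.card σ) (g b)) := by
  have h1 : (Finset.univ.val.map fun p : σ × τ => g p.2) =
      Finset.univ.val.map ((fun p : σ × τ => g p.2) ∘ (Equiv.prodComm τ σ)) := by
    conv_lhs => rw [← Finset.map_univ_equiv (Equiv.prodComm τ σ)]
    rw [Finset.map_val, Multiset.map_map]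
    simp [Function.comp]
  rw [h1]
  have h2 : ((fun p : σ × τ => g p.2) ∘ (Equiv.prodComm τ σ)) = fun p : τ × σ => g p.1 := by
    funext p; simp
  rw [h2, map_univ_prod_bind]
  congr 1
  funext b
  
  rw [show (fun b_1 : σ => g (b, b_1).1) = fun _ : σ => g b from rfl, Multiset.map_const', show Multiset.card (Finset.univ.val : Multiset σ) = Fintype.card σ from rfl]

end Helpers

end StatementThreeHelpers

/-- For the general Gram matrix `G` of the outer-product Hessian of a
depth-`L` deep linear network, if all `λᵢ ∈ [m − δ, m + δ]` with `0 < δ < m` and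
`(m + δ)/(m − δ) < L^{1/(2(L−1))}`, then the eigenvalues of `G` bifurcate: the `r²` dominant
eigenvalues `ν_{i,j}` lie in `[L(m − δ)^{2(L−1)}, L(m + δ)^{2(L−1)}]`, the
`(d₀ + d_L − 2r)r` bulk eigenvalues lie in `[(m − δ)^{2(L−1)}, (m + δ)^{2(L−1)}]`, every
dominant eigenvalue strictly exceeds every bulk eigenvalue, and the dominant/bulk ratio is
pinched between `L((m−δ)/(m+δ))^{2(L−1)}` and `L((m+δ)/(m−δ))^{2(L−1)}`. -/
theorem statement3 (L d0 dL r : ℕ) (hL : 2 ≤ L) (hd0 : 1 ≤ d0) (hdL : 1 ≤ dL)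
    (hr1 : 1 ≤ r) (hr : r ≤ min d0 dL)
    (U1 : Matrix (Fin dL) (Fin r) ℝ) (V1 : Matrix (Fin d0) (Fin r) ℝ)
    (hU1 : U1ᵀ * U1 = 1) (hV1 : V1ᵀ * V1 = 1)
    (lam : Fin r → ℝ) (hlam : ∀ i, 0 < lam i)
    (m δ : ℝ) (hδ : 0 < δ) (hδm : δ < m)
    (hmem : ∀ i, lam i ∈ Set.Icc (m - δ) (m + δ))
    (hgap : (m + δ) / (m - δ) < (L : ℝ) ^ ((1 : ℝ) / (2 * ((L : ℝ) - 1))))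
    (G : Matrix (Fin dL × Fin d0) (Fin dL × Fin d0) ℝ)
    (hGdef : G =
      (U1 * Matrix.diagonal (fun i => lam i ^ (2 * (L - 1))) * U1ᵀ) ⊗ₖ
          (1 : Matrix (Fin d0) (Fin d0) ℝ) +
        (1 : Matrix (Fin dL) (Fin dL) ℝ) ⊗ₖ
          (V1 * Matrix.diagonal (fun i => lam i ^ (2 * (L - 1))) * V1ᵀ) +
        ∑ l ∈ Finset.Icc 2 (L - 1),
          (U1 * Matrix.diagonal (fun i => lam i ^ (2 * (L - l))) * U1ᵀ) ⊗ₖ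
            (V1 * Matrix.diagonal (fun i => lam i ^ (2 * (l - 1))) * V1ᵀ))
    (hG : G.IsHermitian) :
    -- the eigenvalues of `G` are exactly the two clusters together with zero
    (Finset.univ.val.map hG.eigenvalues =
        (Finset.univ.val.map fun p : Fin r × Fin r =>
          ∑ l ∈ Finset.Icc 1 L, lam p.1 ^ (2 * (L - l)) * lam p.2 ^ (2 * (l - 1))) +
        (Finset.univ.val.bind fun i : Fin r =>
          Multiset.replicate (d0 - r) (lam i ^ (2 * (L - 1)))) +
        (Finset.univ.val.bind fun j : Fin r =>
          Multiset.replicate (dL - r) (lam j ^ (2 * (L - 1)))) +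
        Multiset.replicate ((dL - r) * (d0 - r)) (0 : ℝ)) ∧
    -- (i) dominant cluster
    (∀ i j : Fin r,
      (∑ l ∈ Finset.Icc 1 L, lam i ^ (2 * (L - l)) * lam j ^ (2 * (l - 1))) ∈
        Set.Icc ((L : ℝ) * (m - δ) ^ (2 * (L - 1))) ((L : ℝ) * (m + δ) ^ (2 * (L - 1)))) ∧
    -- (ii) bulk cluster
    (∀ i : Fin r,
      lam i ^ (2 * (L - 1)) ∈ Set.Icc ((m - δ) ^ (2 * (L - 1))) ((m + δ) ^ (2 * (L - 1)))) ∧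
    -- (iii) strict separation of the clusters
    (∀ i j i' : Fin r,
      lam i' ^ (2 * (L - 1)) <
        ∑ l ∈ Finset.Icc 1 L, lam i ^ (2 * (L - l)) * lam j ^ (2 * (l - 1))) ∧
    -- (iv) dominant-to-bulk ratio bounds
    (∀ i j i' : Fin r,
      (L : ℝ) * ((m - δ) / (m + δ)) ^ (2 * (L - 1)) ≤
          (∑ l ∈ Finset.Icc 1 L, lam i ^ (2 * (L - l)) * lam j ^ (2 * (l - 1))) /
            lam i' ^ (2 * (L - 1)) ∧
        (∑ l ∈ Finset.Icc 1 L, lam i ^ (2 * (L - l)) * lam j ^ (2 * (l - 1))) /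
            lam i' ^ (2 * (L - 1)) ≤
          (L : ℝ) * ((m + δ) / (m - δ)) ^ (2 * (L - 1))) := by
  have hrd0 : r ≤ d0 := le_trans hr (min_le_left _ _)
  have hrdL : r ≤ dL := le_trans hr (min_le_right _ _)
  have hL1 : (1 : ℕ) ≤ L := by omega
  have ha : (0 : ℝ) < m - δ := by linarith
  have hb : (0 : ℝ) < m + δ := by linarith
  -- (ii) bulk bounds
  have hbulk : ∀ i : Fin r,
      lam i ^ (2 * (L - 1)) ∈ Set.Icc ((m - δ) ^ (2 * (L - 1))) ((m + δ) ^ (2 * (L - 1))) := by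
    intro i
    exact ⟨pow_le_pow_left₀ ha.le (hmem i).1 _, pow_le_pow_left₀ (hlam i).le (hmem i).2 _⟩
  -- (i) dominant bounds
  have hdom : ∀ i j : Fin r,
      (∑ l ∈ Finset.Icc 1 L, lam i ^ (2 * (L - l)) * lam j ^ (2 * (l - 1))) ∈
        Set.Icc ((L : ℝ) * (m - δ) ^ (2 * (L - 1))) ((L : ℝ) * (m + δ) ^ (2 * (L - 1))) := by
    intro i j
    have hcard : (Finset.Icc 1 L).card = L := by rw [Nat.card_Icc]; omega
    constructor
    · have := Finset.card_nsmul_le_sum (Finset.Icc 1 L)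
        (fun l => lam i ^ (2 * (L - l)) * lam j ^ (2 * (l - 1))) ((m - δ) ^ (2 * (L - 1)))
        (by
          intro l hl
          simp only [Finset.mem_Icc] at hl
          have e1 : (m - δ) ^ (2 * (L - l)) ≤ lam i ^ (2 * (L - l)) :=
            pow_le_pow_left₀ ha.le (hmem i).1 _
          have e2 : (m - δ) ^ (2 * (l - 1)) ≤ lam j ^ (2 * (l - 1)) :=
            pow_le_pow_left₀ ha.le (hmem j).1 _
          have e3 : (m - δ) ^ (2 * (L - 1)) = (m - δ) ^ (2 * (L - l)) * (m - δ) ^ (2 * (l - 1)) := by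
            rw [← pow_add]; congr 1; omega
          rw [e3]
          exact mul_le_mul e1 e2 (pow_nonneg ha.le _) (pow_nonneg (hlam i).le _))
      rwa [hcard, nsmul_eq_mul] at this
    · have := Finset.sum_le_card_nsmul (Finset.Icc 1 L)
        (fun l => lam i ^ (2 * (L - l)) * lam j ^ (2 * (l - 1))) ((m + δ) ^ (2 * (L - 1)))
        (by
          intro l hl
          simp only [Finset.mem_Icc] at hl
          have e1 : lam i ^ (2 * (L - l)) ≤ (m + δ) ^ (2 * (L - l)) :=
            pow_le_pow_left₀ (hlam i).le (hmem i).2 _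
          have e2 : lam j ^ (2 * (l - 1)) ≤ (m + δ) ^ (2 * (l - 1)) :=
            pow_le_pow_left₀ (hlam j).le (hmem j).2 _
          have e3 : (m + δ) ^ (2 * (L - 1)) = (m + δ) ^ (2 * (L - l)) * (m + δ) ^ (2 * (l - 1)) := by
            rw [← pow_add]; congr 1; omega
          rw [e3]
          exact mul_le_mul e1 e2 (pow_nonneg (hlam j).le _) (by positivity))
      rwa [hcard, nsmul_eq_mul] at this
  -- key gap
  have hkey : (m + δ) ^ (2 * (L - 1)) < (L : ℝ) * (m - δ) ^ (2 * (L - 1)) := by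
    have hEne : 2 * (L - 1) ≠ 0 := by omega
    have h0 : (0 : ℝ) < (m + δ) / (m - δ) := div_pos hb ha
    have h1 : ((m + δ) / (m - δ)) ^ (2 * (L - 1)) <
        ((L : ℝ) ^ ((1 : ℝ) / (2 * ((L : ℝ) - 1)))) ^ (2 * (L - 1)) :=
      pow_lt_pow_left₀ hgap h0.le hEne
    have hL0 : (0 : ℝ) ≤ (L : ℝ) := Nat.cast_nonneg L
    have hcastE : ((2 * (L - 1) : ℕ) : ℝ) = 2 * ((L : ℝ) - 1) := by
      rw [Nat.cast_mul, Nat.cast_sub hL1]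
      norm_num
    have hne : (2 * ((L : ℝ) - 1)) ≠ 0 := by
      have : (2 : ℝ) ≤ (L : ℝ) := by exact_mod_cast hL
      nlinarith
    have h2 : ((L : ℝ) ^ ((1 : ℝ) / (2 * ((L : ℝ) - 1)))) ^ (2 * (L - 1)) = (L : ℝ) := by
      rw [← Real.rpow_natCast ((L : ℝ) ^ ((1 : ℝ) / (2 * ((L : ℝ) - 1)))) (2 * (L - 1)),
        ← Real.rpow_mul hL0, hcastE]
      rw [show (1 : ℝ) / (2 * ((L : ℝ) - 1)) * (2 * ((L : ℝ) - 1)) = 1 by rw [one_div, inv_mul_cancel₀ hne]]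
      exact Real.rpow_one _
    rw [h2, div_pow, div_lt_iff₀ (pow_pos ha _)] at h1
    linarith
  -- (iii)
  have hsep : ∀ i j i' : Fin r,
      lam i' ^ (2 * (L - 1)) <
        ∑ l ∈ Finset.Icc 1 L, lam i ^ (2 * (L - l)) * lam j ^ (2 * (l - 1)) := by
    intro i j i'
    calc lam i' ^ (2 * (L - 1)) ≤ (m + δ) ^ (2 * (L - 1)) := (hbulk i').2
      _ < (L : ℝ) * (m - δ) ^ (2 * (L - 1)) := hkey
      _ ≤ _ := (hdom i j).1
  -- (iv)
  have hratio : ∀ i j i' : Fin r,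
      (L : ℝ) * ((m - δ) / (m + δ)) ^ (2 * (L - 1)) ≤
          (∑ l ∈ Finset.Icc 1 L, lam i ^ (2 * (L - l)) * lam j ^ (2 * (l - 1))) /
            lam i' ^ (2 * (L - 1)) ∧
        (∑ l ∈ Finset.Icc 1 L, lam i ^ (2 * (L - l)) * lam j ^ (2 * (l - 1))) /
            lam i' ^ (2 * (L - 1)) ≤
          (L : ℝ) * ((m + δ) / (m - δ)) ^ (2 * (L - 1)) := by
    intro i j i'
    have hpos : (0 : ℝ) < lam i' ^ (2 * (L - 1)) := pow_pos (hlam i') _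
    have hdompos : (0 : ℝ) ≤ ∑ l ∈ Finset.Icc 1 L, lam i ^ (2 * (L - l)) * lam j ^ (2 * (l - 1)) := by
      have := (hdom i j).1
      have hLpos : (0 : ℝ) < (L : ℝ) := by exact_mod_cast (by omega : 0 < L)
      nlinarith [pow_pos ha (2 * (L - 1))]
    constructor
    · have h1 : ((L : ℝ) * (m - δ) ^ (2 * (L - 1))) / ((m + δ) ^ (2 * (L - 1))) ≤
          (∑ l ∈ Finset.Icc 1 L, lam i ^ (2 * (L - l)) * lam j ^ (2 * (l - 1))) /
            lam i' ^ (2 * (L - 1)) :=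
        div_le_div₀ hdompos (hdom i j).1 hpos (hbulk i').2
      calc (L : ℝ) * ((m - δ) / (m + δ)) ^ (2 * (L - 1))
          = ((L : ℝ) * (m - δ) ^ (2 * (L - 1))) / ((m + δ) ^ (2 * (L - 1))) := by
            rw [div_pow, mul_div_assoc]
        _ ≤ _ := h1
    · have h1 : (∑ l ∈ Finset.Icc 1 L, lam i ^ (2 * (L - l)) * lam j ^ (2 * (l - 1))) /
            lam i' ^ (2 * (L - 1)) ≤
          ((L : ℝ) * (m + δ) ^ (2 * (L - 1))) / ((m - δ) ^ (2 * (L - 1))) :=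
        div_le_div₀ (by positivity) (hdom i j).2 (pow_pos ha _) (hbulk i').1
      calc (∑ l ∈ Finset.Icc 1 L, lam i ^ (2 * (L - l)) * lam j ^ (2 * (l - 1))) /
            lam i' ^ (2 * (L - 1)) ≤
          ((L : ℝ) * (m + δ) ^ (2 * (L - 1))) / ((m - δ) ^ (2 * (L - 1))) := h1
        _ = (L : ℝ) * ((m + δ) / (m - δ)) ^ (2 * (L - 1)) := by
            rw [div_pow, mul_div_assoc]
  -- the multiset identity
  obtain ⟨U, hUtU, hUUt, hUcol⟩ := exists_orthogonal_extension hrdL U1 hU1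
  obtain ⟨V, hVtV, hVVt, hVcol⟩ := exists_orthogonal_extension hrd0 V1 hV1
  set nu : Fin dL × Fin d0 → ℝ := fun p =>
    padFn (fun i => lam i ^ (2 * (L - 1))) p.1 + padFn (fun i => lam i ^ (2 * (L - 1))) p.2 +
      ∑ l ∈ Finset.Icc 2 (L - 1),
        padFn (fun i => lam i ^ (2 * (L - l))) p.1 *
          padFn (fun i => lam i ^ (2 * (l - 1))) p.2 with hnu
  have hcU := conj_pad hrdL U U1 hUtU hUcol
  have hcV := conj_pad hrd0 V V1 hVtV hVcol
  have hWtW : (U ⊗ₖ V)ᵀ * (U ⊗ₖ V) = 1 := by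
    rw [← Matrix.kroneckerMap_transpose, ← Matrix.mul_kronecker_mul, hUtU, hVtV,
      Matrix.one_kronecker_one]
  have hWWt : (U ⊗ₖ V) * (U ⊗ₖ V)ᵀ = 1 := by
    rw [← Matrix.kroneckerMap_transpose, ← Matrix.mul_kronecker_mul, hUUt, hVVt,
      Matrix.one_kronecker_one]
  have hterm : ∀ (A : Matrix (Fin dL) (Fin dL) ℝ) (B : Matrix (Fin d0) (Fin d0) ℝ),
      (U ⊗ₖ V)ᵀ * (A ⊗ₖ B) * (U ⊗ₖ V) = (Uᵀ * A * U) ⊗ₖ (Vᵀ * B * V) := by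
    intro A B
    rw [← Matrix.kroneckerMap_transpose, ← Matrix.mul_kronecker_mul, ← Matrix.mul_kronecker_mul]
  have hGW : (U ⊗ₖ V)ᵀ * G * (U ⊗ₖ V) = Matrix.diagonal nu := by
    rw [hGdef]
    rw [mul_add, mul_add, add_mul, add_mul, Finset.mul_sum, Finset.sum_mul]
    simp only [hterm, hcU, hcV, Matrix.mul_one, hUtU, hVtV]
    simp only [← Matrix.diagonal_one, Matrix.diagonal_kronecker_diagonal]
    have hdiagsum : (∑ l ∈ Finset.Icc 2 (L - 1), Matrix.diagonal
          (fun p : Fin dL × Fin d0 => padFn (fun i => lam i ^ (2 * (L - l))) p.1 *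
            padFn (fun i => lam i ^ (2 * (l - 1))) p.2)) =
        Matrix.diagonal (fun p : Fin dL × Fin d0 => ∑ l ∈ Finset.Icc 2 (L - 1),
          padFn (fun i => lam i ^ (2 * (L - l))) p.1 *
            padFn (fun i => lam i ^ (2 * (l - 1))) p.2) := by
      ext p q
      by_cases hpq : p = q
      · subst hpq
        simp [Matrix.sum_apply, Matrix.diagonal_apply_eq]
      · simp [Matrix.sum_apply, Matrix.diagonal_apply_ne _ hpq]
    rw [hdiagsum, Matrix.diagonal_add, Matrix.diagonal_add]
    congr 1
    funext p
    simp [hnu]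
  have hGeq : G = (U ⊗ₖ V) * Matrix.diagonal nu * (U ⊗ₖ V)ᵀ := by
    rw [← hGW]
    calc G = ((U ⊗ₖ V) * (U ⊗ₖ V)ᵀ) * G * ((U ⊗ₖ V) * (U ⊗ₖ V)ᵀ) := by
          rw [hWWt, one_mul, mul_one]
      _ = (U ⊗ₖ V) * ((U ⊗ₖ V)ᵀ * G * (U ⊗ₖ V)) * (U ⊗ₖ V)ᵀ := by
          simp only [Matrix.mul_assoc]
  have hchar : G.charpoly = (Matrix.diagonal nu).charpoly := by
    rw [hGeq]; exact charpoly_conj_aux _ _ _ hWWt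
  have hms := eig_multiset hG nu hchar
  have hd0' : r + (d0 - r) = d0 := by omega
  have hdL' : r + (dL - r) = dL := by omega
  have epadUl : ∀ (f : Fin r → ℝ) (i : Fin r),
      padFn f (Fin.cast hdL' (Fin.castAdd (dL - r) i)) = f i := by
    intro f i
    have hval : ((Fin.cast hdL' (Fin.castAdd (dL - r) i)) : ℕ) = (i : ℕ) := rfl
    rw [padFn]; simp only [hval]; rw [dif_pos i.isLt]
  have epadUr : ∀ (f : Fin r → ℝ) (j : Fin (dL - r)),
      padFn f (Fin.cast hdL' (Fin.natAdd r j)) = 0 := by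
    intro f j
    have hval : ((Fin.cast hdL' (Fin.natAdd r j)) : ℕ) = r + (j : ℕ) := rfl
    rw [padFn]; simp only [hval]; rw [dif_neg (by omega)]
  have epadVl : ∀ (f : Fin r → ℝ) (i : Fin r),
      padFn f (Fin.cast hd0' (Fin.castAdd (d0 - r) i)) = f i := by
    intro f i
    have hval : ((Fin.cast hd0' (Fin.castAdd (d0 - r) i)) : ℕ) = (i : ℕ) := rfl
    rw [padFn]; simp only [hval]; rw [dif_pos i.isLt]
  have epadVr : ∀ (f : Fin r → ℝ) (j : Fin (d0 - r)),
      padFn f (Fin.cast hd0' (Fin.natAdd r j)) = 0 := by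
    intro f j
    have hval : ((Fin.cast hd0' (Fin.natAdd r j)) : ℕ) = r + (j : ℕ) := rfl
    rw [padFn]; simp only [hval]; rw [dif_neg (by omega)]
  have hmap : (Finset.univ.val.map nu) =
      Finset.univ.val.map (fun q : (Fin r ⊕ Fin (dL - r)) × (Fin r ⊕ Fin (d0 - r)) =>
        nu ((Equiv.prodCongr (finSumFinEquiv.trans (finCongr hdL'))
          (finSumFinEquiv.trans (finCongr hd0'))) q)) := by
    conv_lhs => rw [← Finset.map_univ_equiv (Equiv.prodCongr
      (finSumFinEquiv.trans (finCongr hdL')) (finSumFinEquiv.trans (finCongr hd0')))]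
    rw [Finset.map_val, Multiset.map_map]
    simp [Function.comp]
  have hp1 : (Finset.univ.val.map fun p : Fin r × Fin r =>
        nu ((Equiv.prodCongr (finSumFinEquiv.trans (finCongr hdL'))
          (finSumFinEquiv.trans (finCongr hd0'))) (Sum.inl p.1, Sum.inl p.2))) =
      (Finset.univ.val.map fun p : Fin r × Fin r =>
        ∑ l ∈ Finset.Icc 1 L, lam p.1 ^ (2 * (L - l)) * lam p.2 ^ (2 * (l - 1))) := by
    congr 1
    funext p
    simp only [hnu, Equiv.prodCongr_apply, Prod.map, Equiv.trans_apply, finCongr_apply,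
      finSumFinEquiv_apply_left, epadUl, epadVl]
    rw [sum_Icc_split L hL (fun l => lam p.1 ^ (2 * (L - l)) * lam p.2 ^ (2 * (l - 1)))]
    have h1 : 2 * (L - L) = 0 := by omega
    have h2 : 2 * (1 - 1) = 0 := by omega
    rw [h1, h2, pow_zero, pow_zero, mul_one, one_mul]
  have hp2 : (Finset.univ.val.map fun p : Fin r × Fin (d0 - r) =>
        nu ((Equiv.prodCongr (finSumFinEquiv.trans (finCongr hdL'))
          (finSumFinEquiv.trans (finCongr hd0'))) (Sum.inl p.1, Sum.inr p.2))) =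
      Finset.univ.val.bind fun i : Fin r =>
        Multiset.replicate (d0 - r) (lam i ^ (2 * (L - 1))) := by
    have hfun : (fun p : Fin r × Fin (d0 - r) =>
        nu ((Equiv.prodCongr (finSumFinEquiv.trans (finCongr hdL'))
          (finSumFinEquiv.trans (finCongr hd0'))) (Sum.inl p.1, Sum.inr p.2))) =
        fun p => lam p.1 ^ (2 * (L - 1)) := by
      funext p
      simp [hnu, Equiv.prodCongr_apply, Prod.map, Equiv.trans_apply, finCongr_apply,
        epadUl, epadVr]
    rw [hfun, map_univ_prod_bind]
    congr 1
    funext i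
    rw [show (fun b : Fin (d0 - r) => lam (i, b).1 ^ (2 * (L - 1))) =
        fun _ : Fin (d0 - r) => lam i ^ (2 * (L - 1)) from rfl, Multiset.map_const',
      show Multiset.card (Finset.univ.val : Multiset (Fin (d0 - r))) = d0 - r from by
        show (Finset.univ : Finset (Fin (d0 - r))).card = d0 - r
        simp]
  have hp3 : (Finset.univ.val.map fun p : Fin (dL - r) × Fin r =>
        nu ((Equiv.prodCongr (finSumFinEquiv.trans (finCongr hdL'))
          (finSumFinEquiv.trans (finCongr hd0'))) (Sum.inr p.1, Sum.inl p.2))) =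
      Finset.univ.val.bind fun j : Fin r =>
        Multiset.replicate (dL - r) (lam j ^ (2 * (L - 1))) := by
    have hfun : (fun p : Fin (dL - r) × Fin r =>
        nu ((Equiv.prodCongr (finSumFinEquiv.trans (finCongr hdL'))
          (finSumFinEquiv.trans (finCongr hd0'))) (Sum.inr p.1, Sum.inl p.2))) =
        fun p => lam p.2 ^ (2 * (L - 1)) := by
      funext p
      simp [hnu, Equiv.prodCongr_apply, Prod.map, Equiv.trans_apply, finCongr_apply,
        epadUr, epadVl]
    rw [hfun, map_univ_prod_const_right (fun x : Fin r => lam x ^ (2 * (L - 1)))]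
    simp
  have hp4 : (Finset.univ.val.map fun p : Fin (dL - r) × Fin (d0 - r) =>
        nu ((Equiv.prodCongr (finSumFinEquiv.trans (finCongr hdL'))
          (finSumFinEquiv.trans (finCongr hd0'))) (Sum.inr p.1, Sum.inr p.2))) =
      Multiset.replicate ((dL - r) * (d0 - r)) (0 : ℝ) := by
    have hfun : (fun p : Fin (dL - r) × Fin (d0 - r) =>
        nu ((Equiv.prodCongr (finSumFinEquiv.trans (finCongr hdL'))
          (finSumFinEquiv.trans (finCongr hd0'))) (Sum.inr p.1, Sum.inr p.2))) =
        fun _ => (0 : ℝ) := by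
      funext p
      simp [hnu, Equiv.prodCongr_apply, Prod.map, Equiv.trans_apply, finCongr_apply,
        epadUr, epadVr]
    rw [hfun, Multiset.map_const']
    congr 1
    rw [show Multiset.card (Finset.univ.val : Multiset (Fin (dL - r) × Fin (d0 - r))) =
      Fintype.card (Fin (dL - r) × Fin (d0 - r)) from rfl]
    simp [Fintype.card_prod]
  refine ⟨?_, hdom, hbulk, hsep, hratio⟩
  rw [hms, hmap, map_univ_sum_prod, hp1, hp2, hp3, hp4]
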